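/- Let E be a real Hilbert space with a Hilbert (orthonormal) basis (φ_i)_{i ∈ ℕ}, let λ : ℕ → ℝ be nonincreasing with λ i ≥ 0 for all i, and let η : ℕ → ℝ satisfy 0 ≤ η s and η s · λ 0 ≤ 1 for all s. For t ∈ ℕ and i ∈ ℕ set ρ_i(t) := Π_{s=0}^{t} (1 − η s · λ i). Then for every Δ₀ ∈ E, every t ∈ ℕ and every r ∈ ℕ, ‖ Σ'_{i ∈ ℕ} ρ_i(t) · ⟨Δ₀, φ_i⟩ • φ_i ‖ ≤ ρ_r(t) · ‖Δ₀‖ + √( Σ'_{i > r} ⟨Δ₀, φ_i⟩² ). -/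

import Mathlib

open RealInnerProductSpace
open scoped ENNReal

private lemma sqrt_add_le_aux {a b : ℝ} (ha : 0 ≤ a) (hb : 0 ≤ b) :
    Real.sqrt (a + b) ≤ Real.sqrt a + Real.sqrt b := by
  have h : a + b ≤ (Real.sqrt a + Real.sqrt b) ^ 2 := by
    have := Real.sq_sqrt ha
    have := Real.sq_sqrt hb
    have h2 : 0 ≤ Real.sqrt a * Real.sqrt b :=
      mul_nonneg (Real.sqrt_nonneg a) (Real.sqrt_nonneg b)
    nlinarith
  calc Real.sqrt (a + b) ≤ Real.sqrt ((Real.sqrt a + Real.sqrt b) ^ 2) :=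
        Real.sqrt_le_sqrt h
    _ = Real.sqrt a + Real.sqrt b :=
        Real.sqrt_sq (by positivity)

private lemma norm_rpow_two_eq_sq (x : ℝ) : ‖x‖ ^ (2 : ℝ≥0∞).toReal = x ^ 2 := by
  rw [ENNReal.toReal_ofNat, Real.norm_eq_abs, show (2 : ℝ) = ((2 : ℕ) : ℝ) by norm_num,
    Real.rpow_natCast, sq_abs]

/-- Spectral contraction bound: for a Hilbert basis `(φ i)` of a real Hilbert space,
nonincreasing nonnegative eigenvalues `λ i`, and step sizes `0 ≤ η s` with
`η s * λ 0 ≤ 1`, setting `ρ i t = ∏_{s=0}^t (1 - η s * λ i)`, one has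
`‖∑' i, ρ i t • ⟪Δ₀, φ i⟫ • φ i‖ ≤ ρ r t * ‖Δ₀‖ + √(∑'_{i > r} ⟪Δ₀, φ i⟫²)`. -/
theorem contraction_eigen_bound {E : Type*} [NormedAddCommGroup E] [InnerProductSpace ℝ E]
    [CompleteSpace E] (φ : HilbertBasis ℕ ℝ E)
    (lam : ℕ → ℝ) (hmono : Antitone lam) (hnonneg : ∀ i, 0 ≤ lam i)
    (η : ℕ → ℝ) (hη0 : ∀ s, 0 ≤ η s) (hη1 : ∀ s, η s * lam 0 ≤ 1)
    (Δ₀ : E) (t r : ℕ) :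
    ‖∑' i : ℕ, (∏ s ∈ Finset.range (t + 1), (1 - η s * lam i)) • (⟪Δ₀, φ i⟫ • φ i)‖ ≤
      (∏ s ∈ Finset.range (t + 1), (1 - η s * lam r)) * ‖Δ₀‖ +
        Real.sqrt (∑' i : {i : ℕ // r < i}, ⟪Δ₀, φ (i : ℕ)⟫ ^ 2) := by
  classical
  set ρ : ℕ → ℝ := fun i => ∏ s ∈ Finset.range (t + 1), (1 - η s * lam i) with hρ
  set c : ℕ → ℝ := fun i => ⟪Δ₀, φ i⟫ with hc
  -- basic facts about ρ
  have hfac0 : ∀ s i, 0 ≤ 1 - η s * lam i := by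
    intro s i
    have : η s * lam i ≤ η s * lam 0 :=
      mul_le_mul_of_nonneg_left (hmono (Nat.zero_le i)) (hη0 s)
    linarith [hη1 s]
  have hfac1 : ∀ s i, 1 - η s * lam i ≤ 1 := by
    intro s i
    have : 0 ≤ η s * lam i := mul_nonneg (hη0 s) (hnonneg i)
    linarith
  have hρ0 : ∀ i, 0 ≤ ρ i := fun i =>
    Finset.prod_nonneg fun s _ => hfac0 s i
  have hρ1 : ∀ i, ρ i ≤ 1 := fun i =>
    Finset.prod_le_one (fun s _ => hfac0 s i) (fun s _ => hfac1 s i)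
  have hρmono : ∀ i, i ≤ r → ρ i ≤ ρ r := by
    intro i hi
    refine Finset.prod_le_prod (fun s _ => hfac0 s i) (fun s _ => ?_)
    have h1 : lam r ≤ lam i := hmono hi
    have h2 : η s * lam r ≤ η s * lam i := mul_le_mul_of_nonneg_left h1 (hη0 s)
    linarith
  -- summability of c^2
  have hsumc : HasSum (fun i => c i ^ 2) (‖Δ₀‖ ^ 2) := by
    have h := φ.hasSum_inner_mul_inner Δ₀ Δ₀
    rw [real_inner_self_eq_norm_sq] at h
    have heq : (fun i => (⟪Δ₀, φ i⟫ : ℝ) * ⟪φ i, Δ₀⟫) = fun i => c i ^ 2 := by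
      funext i
      rw [hc]
      simp only []
      rw [real_inner_comm Δ₀ (φ i)]
      ring
    rwa [heq] at h
  have hsumc' : Summable fun i => c i ^ 2 := hsumc.summable
  -- the sequence g = ρ * c is in ℓ²
  set g : ℕ → ℝ := fun i => ρ i * c i with hg
  have hg2le : ∀ i, g i ^ 2 ≤ c i ^ 2 := by
    intro i
    have h1 : g i ^ 2 = ρ i ^ 2 * c i ^ 2 := by rw [hg]; ring
    rw [h1]
    have : ρ i ^ 2 ≤ 1 := by nlinarith [hρ0 i, hρ1 i]
    nlinarith [sq_nonneg (c i)]
  have hsumg : Summable fun i => g i ^ 2 :=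
    hsumc'.of_nonneg_of_le (fun i => sq_nonneg _) hg2le
  have hmem : Memℓp g 2 := by
    apply memℓp_gen
    have h3 : (fun i => ‖g i‖ ^ (2 : ℝ≥0∞).toReal) = fun i => g i ^ 2 := by
      funext i; exact norm_rpow_two_eq_sq (g i)
    rw [h3]; exact hsumg
  set G : lp (fun _ : ℕ => ℝ) 2 := ⟨g, hmem⟩ with hG
  -- identify the tsum
  have hhs : HasSum (fun i => (ρ i) • ((c i) • φ i)) (φ.repr.symm G) := by
    have h := φ.hasSum_repr_symm G
    have heq : (fun i => G i • φ i) = fun i => (ρ i) • ((c i) • φ i) := by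
      funext i; rw [smul_smul]
    rwa [heq] at h
  rw [hhs.tsum_eq]
  -- norm computation
  have h2' : ‖G‖ ^ (2 : ℕ) = ∑' i, g i ^ 2 := by
    have h2 := lp.norm_rpow_eq_tsum (p := 2) (by norm_num) G
    have hL : ‖G‖ ^ (2 : ℝ≥0∞).toReal = ‖G‖ ^ (2 : ℕ) := by
      rw [ENNReal.toReal_ofNat, show (2 : ℝ) = ((2 : ℕ) : ℝ) by norm_num, Real.rpow_natCast]
    rw [← hL, h2]
    exact tsum_congr fun i => norm_rpow_two_eq_sq (g i)
  have hnorm : ‖φ.repr.symm G‖ = Real.sqrt (∑' i, g i ^ 2) := by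
    rw [LinearIsometryEquiv.norm_map, ← h2', Real.sqrt_sq (norm_nonneg G)]
  rw [hnorm]
  -- split the tsum
  set S : Set ℕ := {i : ℕ | r < i} with hS
  have hsplit := Summable.tsum_subtype_add_tsum_subtype_compl hsumg S
  -- bound each piece
  have hsumgS : Summable fun i : ↥S => g (i : ℕ) ^ 2 := hsumg.subtype S
  have hsumgSc : Summable fun i : ↥Sᶜ => g (i : ℕ) ^ 2 := hsumg.subtype Sᶜ
  have hsumcS : Summable fun i : ↥S => c (i : ℕ) ^ 2 := hsumc'.subtype S
  have hsumcSc : Summable fun i : ↥Sᶜ => c (i : ℕ) ^ 2 := hsumc'.subtype Sᶜ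
  have hb1 : (∑' i : ↥Sᶜ, g (i : ℕ) ^ 2) ≤ ρ r ^ 2 * ‖Δ₀‖ ^ 2 := by
    have step1 : (∑' i : ↥Sᶜ, g (i : ℕ) ^ 2) ≤ ∑' i : ↥Sᶜ, ρ r ^ 2 * c (i : ℕ) ^ 2 := by
      apply Summable.tsum_le_tsum _ hsumgSc (hsumcSc.mul_left _)
      intro i
      have hi : (i : ℕ) ≤ r := by
        have h := i.2
        simp only [hS, Set.mem_compl_iff, Set.mem_setOf_eq, not_lt] at h
        exact h
      have h1 : g (i : ℕ) ^ 2 = ρ (i : ℕ) ^ 2 * c (i : ℕ) ^ 2 := by rw [hg]; ring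
      rw [h1]
      have hsq : ρ (i : ℕ) ^ 2 ≤ ρ r ^ 2 := by
        have := hρmono _ hi
        nlinarith [hρ0 (i : ℕ)]
      nlinarith [sq_nonneg (c (i : ℕ))]
    have step2 : (∑' i : ↥Sᶜ, ρ r ^ 2 * c (i : ℕ) ^ 2) ≤ ρ r ^ 2 * ‖Δ₀‖ ^ 2 := by
      rw [tsum_mul_left]
      have htail : (∑' i : ↥Sᶜ, c (i : ℕ) ^ 2) ≤ ‖Δ₀‖ ^ 2 := by
        rw [← hsumc.tsum_eq]
        exact Summable.tsum_subtype_le (fun i => c i ^ 2) _ (fun i => sq_nonneg _) hsumc'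
      exact mul_le_mul_of_nonneg_left htail (sq_nonneg _)
    linarith
  have hb2 : (∑' i : ↥S, g (i : ℕ) ^ 2) ≤ ∑' i : ↥S, c (i : ℕ) ^ 2 :=
    Summable.tsum_le_tsum (fun i => hg2le _) hsumgS hsumcS
  -- put it together
  have htotal : (∑' i, g i ^ 2) ≤ ρ r ^ 2 * ‖Δ₀‖ ^ 2 + ∑' i : ↥S, c (i : ℕ) ^ 2 := by
    rw [← hsplit]; linarith
  have hfin : Real.sqrt (∑' i, g i ^ 2) ≤
      Real.sqrt (ρ r ^ 2 * ‖Δ₀‖ ^ 2) + Real.sqrt (∑' i : ↥S, c (i : ℕ) ^ 2) := by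
    calc Real.sqrt (∑' i, g i ^ 2)
        ≤ Real.sqrt (ρ r ^ 2 * ‖Δ₀‖ ^ 2 + ∑' i : ↥S, c (i : ℕ) ^ 2) :=
          Real.sqrt_le_sqrt htotal
      _ ≤ _ := sqrt_add_le_aux (by positivity)
          (tsum_nonneg fun i => sq_nonneg _)
  have hsq : Real.sqrt (ρ r ^ 2 * ‖Δ₀‖ ^ 2) = ρ r * ‖Δ₀‖ := by
    rw [← mul_pow, Real.sqrt_sq (mul_nonneg (hρ0 r) (norm_nonneg _))]
  rw [hsq] at hfin
  have hSeq : (∑' i : ↥S, c (i : ℕ) ^ 2)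
      = ∑' i : {i : ℕ // r < i}, (⟪Δ₀, φ (i : ℕ)⟫ : ℝ) ^ 2 := rfl
  rw [hSeq] at hfin
  exact hfin
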